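/- Let Q be a finite quiver whose vertex set Q₀ has at least two elements, and suppose there exists α : Q₀ → ℤ with α i ≥ 1 for every vertex i and (e_i, α) ≤ −1 for every vertex i. Then for every natural number N there exists β : Q₀ → ℤ such that β i ≥ 1 for every i, (e_i, β) ≤ −1 for every i, the greatest common divisor of the values {β i : i ∈ Q₀} equals 1, and (β, β) ≤ −N. -/

import Mathlib

/-- The symmetrized Euler (Tits) form of a finite quiver with vertex set `V`,
arrow set `E`, and head and tail maps `h t : E → V`. -/
def titsForm {V E : Type} [Fintype V] [Fintype E] (h t : E → V) (α β : V → ℤ) : ℤ :=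
  2 * ∑ i, α i * β i - ∑ a, (α (t a) * β (h a) + α (h a) * β (t a))

/-- The coordinate vector `e_i`. -/
def unitVec {V : Type} [DecidableEq V] (i : V) : V → ℤ := fun j => if j = i then 1 else 0

lemma titsForm_expand {V E : Type} [Fintype V] [Fintype E] [DecidableEq V]
    (h t : E → V) (β : V → ℤ) :
    titsForm h t β β = ∑ j, β j * titsForm h t (unitVec j) β := by
  simp only [titsForm, unitVec]
  simp only [ite_mul, one_mul, zero_mul, Finset.sum_ite_eq', Finset.mem_univ, if_true,
    mul_sub, Finset.mul_sum, mul_add]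
  rw [Finset.sum_sub_distrib, Finset.sum_comm (s := Finset.univ) (t := Finset.univ)]
  congr 1
  · exact Finset.sum_congr rfl fun j _ => by ring
  · congr 1; ext a
    simp [Finset.sum_add_distrib, mul_ite, Finset.sum_ite_eq', mul_comm]

lemma titsForm_linear {V E : Type} [Fintype V] [Fintype E] [DecidableEq V]
    (h t : E → V) (γ α δ : V → ℤ) (m : ℤ) :
    titsForm h t γ (fun j => m * α j + δ j) = m * titsForm h t γ α + titsForm h t γ δ := by
  simp only [titsForm]
  simp only [mul_add, mul_sub, Finset.sum_add_distrib, Finset.mul_sum]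
  rw [Finset.sum_congr rfl (fun (x:V) _ => show 2 * (γ x * (m * α x)) = m * (2 * (γ x * α x)) by ring),
    Finset.sum_congr rfl (fun (x:E) _ => show γ (t x) * (m * α (h x)) = m * (γ (t x) * α (h x)) by ring),
    Finset.sum_congr rfl (fun (x:E) _ => show γ (h x) * (m * α (t x)) = m * (γ (h x) * α (t x)) by ring)]
  ring

lemma titsForm_unit_le_two {V E : Type} [Fintype V] [Fintype E] [DecidableEq V]
    (h t : E → V) (j i : V) : titsForm h t (unitVec j) (unitVec i) ≤ 2 := by
  simp only [titsForm, unitVec]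
  have h1 : (2:ℤ) * ∑ k, (if k = j then (1:ℤ) else 0) * (if k = i then 1 else 0) ≤ 2 := by
    simp only [ite_mul, one_mul, zero_mul, Finset.sum_ite_eq', Finset.mem_univ, if_true]
    split <;> simp
  have h2 : (0:ℤ) ≤ ∑ a, ((if t a = j then (1:ℤ) else 0) * (if h a = i then 1 else 0) +
      (if h a = j then (1:ℤ) else 0) * (if t a = i then 1 else 0)) := by
    apply Finset.sum_nonneg
    intro a _
    positivity
  omega

/-- If the quiver has at least two vertices and the interior of the cone `C(Q)` contains a
lattice point, then for every `N` there is an indivisible lattice point `β` in the interior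
of the cone with `(β, β) ≤ -N`. -/
theorem exists_indivisible_titsForm_le {V E : Type} [Fintype V] [Fintype E] [DecidableEq V]
    (h t : E → V) (hV : 1 < Fintype.card V)
    (α : V → ℤ) (hα : ∀ i, 1 ≤ α i) (hαneg : ∀ i, titsForm h t (unitVec i) α ≤ -1)
    (N : ℕ) :
    ∃ β : V → ℤ, (∀ i, 1 ≤ β i) ∧ (∀ i, titsForm h t (unitVec i) β ≤ -1) ∧
      Finset.univ.gcd β = 1 ∧ titsForm h t β β ≤ -(N : ℤ) := by
  have hne : Nonempty V := Fintype.card_pos_iff.mp (by omega)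
  obtain ⟨i⟩ := hne
  set P : ℤ := ∏ j, α j with hPdef
  have hP : 1 ≤ P := Finset.prod_induction _ (fun x => 1 ≤ x) (fun a b ha hb => by nlinarith) le_rfl (fun j _ => hα j)
  set m : ℤ := 3 * ((N : ℤ) + 1) * P with hmdef
  have hm3 : 3 ≤ m := by nlinarith [Nat.cast_nonneg (α := ℤ) N]
  have hmN : (N : ℤ) ≤ m := by nlinarith [Nat.cast_nonneg (α := ℤ) N]
  set β : V → ℤ := fun j => m * α j + unitVec i j with hβdef
  have huv_nonneg : ∀ j, 0 ≤ unitVec i j := by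
    intro j; simp only [unitVec]; split <;> norm_num
  have hβ1 : ∀ j, 1 ≤ β j := by
    intro j
    have h1 := hα j
    have h2 := huv_nonneg j
    simp only [hβdef]
    nlinarith
  have hneg : ∀ j, titsForm h t (unitVec j) β ≤ -1 := by
    intro j
    rw [hβdef, titsForm_linear]
    have h1 := hαneg j
    have h2 := titsForm_unit_le_two h t j i
    nlinarith
  refine ⟨β, hβ1, hneg, ?_, ?_⟩
  · -- gcd = 1
    set d : ℤ := Finset.univ.gcd β with hddef
    have hd : ∀ j, d ∣ β j := fun j => Finset.gcd_dvd (Finset.mem_univ j)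
    obtain ⟨j, hji⟩ := Fintype.exists_ne_of_one_lt_card hV i
    have hdj : d ∣ m * α j := by
      have := hd j
      simpa [hβdef, unitVec, hji] using this
    have hdi : d ∣ m * α i + 1 := by
      have := hd i
      simpa [hβdef, unitVec] using this
    have hcop : IsCoprime d m := by
      rw [Int.isCoprime_iff_gcd_eq_one]
      have h1 : (Int.gcd d m : ℤ) ∣ d := Int.gcd_dvd_left d m
      have h2 : (Int.gcd d m : ℤ) ∣ m := Int.gcd_dvd_right d m
      have h3 : (Int.gcd d m : ℤ) ∣ 1 := by
        have := (h1.trans hdi).sub (h2.mul_right (α i))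
        simpa using this
      exact_mod_cast Int.eq_one_of_dvd_one (by positivity) h3
    have hdα : d ∣ α j := hcop.dvd_of_dvd_mul_left hdj
    have hdm : d ∣ m := by
      refine hdα.trans (Dvd.dvd.mul_left ?_ _)
      exact Finset.dvd_prod_of_mem _ (Finset.mem_univ j)
    have hdu : IsUnit d := hcop.isUnit_of_dvd' dvd_rfl hdm
    rcases Int.isUnit_iff.mp hdu with h1 | h1
    · exact h1
    · exfalso
      have := Finset.normalize_gcd (s := (Finset.univ : Finset V)) (f := β)
      rw [← hddef, h1] at this
      exact (by decide : normalize (-1:ℤ) = -1 → False) this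
  · -- titsForm β β ≤ -N
    rw [titsForm_expand]
    have hsum : ∑ j, β j * titsForm h t (unitVec j) β ≤ ∑ j, -β j := by
      apply Finset.sum_le_sum
      intro j _
      have h1 := hβ1 j
      have h2 := hneg j
      nlinarith
    have hsingle : β i ≤ ∑ j, β j :=
      Finset.single_le_sum (fun j _ => le_trans zero_le_one (hβ1 j)) (Finset.mem_univ i)
    have hβi : m ≤ β i := by
      have h1 := hα i
      have h2 := huv_nonneg i
      simp only [hβdef]
      nlinarith
    rw [Finset.sum_neg_distrib] at hsum
    linarith
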